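/- Let F : D → ℝ^m be differentiable with (J_F(0) | F(0))ᵗ ∈ Mat_{(n+1)×m}(ℝ) admitting a rank-revealing factorization (J_F(0)ᵗ; F(0)ᵗ) = (Q₁|Q₂)[[R₁₁,R₁₂],[0,R₂₂]] (take Π = I), with R₁₁ ∈ Mat_r(ℝ) invertible. Define G = R₁₂ᵗR₁₁^{−t} and let F₁, F₂ be the first r and last m−r components of F, and d = GF₁ − F₂. Then (J_d(0) | d(0)) = −R₂₂ᵗQ₂ᵗ, and consequently ‖J_d(0)‖₂ ≤ ‖R₂₂‖₂ and ‖d(0)‖₂ ≤ ‖R₂₂‖₂. -/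

import Mathlib

open Matrix

noncomputable def kthLargest {m : Type*} [Fintype m] (f : m → ℝ) (j : ℕ) : ℝ :=
  let c := Fintype.card m
  let g : Fin c → ℝ := f ∘ (Fintype.equivFin m).symm
  if h : c - j < c then (g ∘ Tuple.sort g) ⟨c - j, h⟩ else 0

noncomputable def singularValue {m n : Type*} [Fintype m] [Fintype n] [DecidableEq n]
    (A : Matrix m n ℝ) (j : ℕ) : ℝ :=
  Real.sqrt (kthLargest (show (Aᵀ * A).IsHermitian by
    simpa [Matrix.conjTranspose_eq_transpose_of_trivial] using
      Matrix.isHermitian_conjTranspose_mul_self A).eigenvalues j)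

noncomputable def specNorm {m n : Type*} [Fintype m] [Fintype n] [DecidableEq n]
    (A : Matrix m n ℝ) : ℝ := singularValue A 1

noncomputable def vec2 {n : Type*} [Fintype n] (v : n → ℝ) : ℝ :=
  Real.sqrt (∑ i, v i ^ 2)

theorem Matrix.isHermitian_transpose_mul_self {m n : Type*} [Fintype m]
    (A : Matrix m n ℝ) : (Aᵀ * A).IsHermitian := by
  simpa [Matrix.conjTranspose_eq_transpose_of_trivial] using
    Matrix.isHermitian_conjTranspose_mul_self A

lemma le_kthLargest_one {m : Type*} [Fintype m] (f : m → ℝ) (j : m) :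
    f j ≤ kthLargest f 1 := by
  have : Nonempty m := ⟨j⟩
  have hcpos : 0 < Fintype.card m := Fintype.card_pos
  have h : Fintype.card m - 1 < Fintype.card m := Nat.sub_lt hcpos one_pos
  unfold kthLargest
  rw [dif_pos h]
  set g : Fin (Fintype.card m) → ℝ := f ∘ (Fintype.equivFin m).symm with hg
  have hfj : f j = g ((Fintype.equivFin m) j) := by simp [hg]
  rw [hfj]
  have h2 : g ((Fintype.equivFin m) j)
      = (g ∘ Tuple.sort g) ((Tuple.sort g)⁻¹ ((Fintype.equivFin m) j)) := by simp
  rw [h2]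
  exact Tuple.monotone_sort g (by
    rw [Fin.le_def]
    exact Nat.le_sub_one_of_lt (Fin.is_lt _))

lemma kthLargest_one_le {m : Type*} [Fintype m] {f : m → ℝ} {c : ℝ}
    (h0 : 0 ≤ c) (hb : ∀ i, f i ≤ c) : kthLargest f 1 ≤ c := by
  unfold kthLargest
  simp only []
  by_cases h : Fintype.card m - 1 < Fintype.card m
  · rw [dif_pos h]; exact hb _
  · rw [dif_neg h]; exact h0

lemma dot_self_nonneg' {k : Type*} [Fintype k] (v : k → ℝ) : 0 ≤ v ⬝ᵥ v :=
  Finset.sum_nonneg fun i _ => mul_self_nonneg _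

lemma dot_self_pos' {k : Type*} [Fintype k] {v : k → ℝ} (hv : v ≠ 0) : 0 < v ⬝ᵥ v :=
  lt_of_le_of_ne (dot_self_nonneg' v)
    (fun h => hv (dotProduct_self_eq_zero.mp h.symm))

lemma mulVec_dot_mulVec' {a b : Type*} [Fintype a] [Fintype b]
    (M : Matrix a b ℝ) (v w : b → ℝ) :
    (M *ᵥ v) ⬝ᵥ (M *ᵥ w) = ((Mᵀ * M) *ᵥ v) ⬝ᵥ w := by
  rw [Matrix.dotProduct_mulVec, ← Matrix.mulVec_transpose, Matrix.mulVec_mulVec]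

-- quadratic form bounded by eigenvalue bound
lemma quadform_le' {k : Type*} [Fintype k] [DecidableEq k] {H : Matrix k k ℝ}
    (hH : H.IsHermitian) {c : ℝ} (hb : ∀ i, hH.eigenvalues i ≤ c) (x : k → ℝ) :
    x ⬝ᵥ (H *ᵥ x) ≤ c * (x ⬝ᵥ x) := by
  have hspec := hH.spectral_theorem
  set U : Matrix k k ℝ := (hH.eigenvectorUnitary : Matrix k k ℝ) with hU
  have hsU : (star (hH.eigenvectorUnitary : Matrix k k ℝ)) = Uᵀ := by
    rw [Matrix.star_eq_conjTranspose, Matrix.conjTranspose_eq_transpose_of_trivial]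
  have hUU : U * Uᵀ = 1 := by
    have := (Matrix.mem_unitaryGroup_iff).mp hH.eigenvectorUnitary.2
    rwa [hsU] at this
  set y : k → ℝ := Uᵀ *ᵥ x with hy
  have hyy : y ⬝ᵥ y = x ⬝ᵥ x := by
    rw [hy, mulVec_dot_mulVec', Matrix.transpose_transpose, hUU, Matrix.one_mulVec]
  set D : Matrix k k ℝ := Matrix.diagonal (RCLike.ofReal ∘ hH.eigenvalues) with hD
  have hmain : x ⬝ᵥ (H *ᵥ x) = y ⬝ᵥ (D *ᵥ y) := by
    rw [hspec, Unitary.conjStarAlgAut_apply, hsU, ← Matrix.mulVec_mulVec, ← Matrix.mulVec_mulVec,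
      Matrix.dotProduct_mulVec, ← Matrix.mulVec_transpose]
  have hd : y ⬝ᵥ (D *ᵥ y) = ∑ i, hH.eigenvalues i * (y i * y i) := by
    unfold dotProduct
    refine Finset.sum_congr rfl fun i _ => ?_
    rw [hD, Matrix.mulVec_diagonal]
    simp
    ring
  rw [hmain, hd, ← hyy]
  have : (y ⬝ᵥ y) = ∑ i, y i * y i := rfl
  rw [this, Finset.mul_sum]
  exact Finset.sum_le_sum fun i _ =>
    mul_le_mul_of_nonneg_right (hb i) (mul_self_nonneg _)

lemma eig_le' {k : Type*} [Fintype k] [DecidableEq k] {H : Matrix k k ℝ}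
    (hH : H.IsHermitian) {c : ℝ}
    (hq : ∀ x : k → ℝ, x ≠ 0 → x ⬝ᵥ (H *ᵥ x) ≤ c * (x ⬝ᵥ x)) (i : k) :
    hH.eigenvalues i ≤ c := by
  set x : k → ℝ := ⇑(hH.eigenvectorBasis i) with hx
  have hxne : x ≠ 0 := by
    intro h
    apply hH.eigenvectorBasis.orthonormal.ne_zero i
    ext j
    exact congrFun h j
  have heig : H *ᵥ x = hH.eigenvalues i • x := hH.mulVec_eigenvectorBasis i
  have h1 : x ⬝ᵥ (H *ᵥ x) = hH.eigenvalues i * (x ⬝ᵥ x) := by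
    rw [heig, dotProduct_smul, smul_eq_mul]
  have h2 := hq x hxne
  rw [h1] at h2
  exact le_of_mul_le_mul_right (by linarith [h2]) (dot_self_pos' hxne)

noncomputable def Kval {a b : Type*} [Fintype a] [Fintype b] [DecidableEq b]
    (A : Matrix a b ℝ) : ℝ :=
  kthLargest (Matrix.isHermitian_transpose_mul_self A).eigenvalues 1

lemma K_nonneg {a b : Type*} [Fintype a] [Fintype b] [DecidableEq b]
    (A : Matrix a b ℝ) : 0 ≤ Kval A := by
  cases isEmpty_or_nonempty b with
  | inl h =>
    unfold Kval kthLargest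
    simp [Fintype.card_eq_zero]
  | inr h =>
    obtain ⟨i⟩ := h
    exact le_trans (Matrix.eigenvalues_conjTranspose_mul_self_nonneg A i)
      (le_kthLargest_one _ i)

lemma eig_le_K {a b : Type*} [Fintype a] [Fintype b] [DecidableEq b]
    (A : Matrix a b ℝ) (i : b) :
    (Matrix.isHermitian_transpose_mul_self A).eigenvalues i ≤ Kval A :=
  le_kthLargest_one _ i

lemma quad_le_K {a b : Type*} [Fintype a] [Fintype b] [DecidableEq b]
    (A : Matrix a b ℝ) (x : b → ℝ) :
    (A *ᵥ x) ⬝ᵥ (A *ᵥ x) ≤ Kval A * (x ⬝ᵥ x) := by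
  have hAH : Aᴴ = Aᵀ := Matrix.conjTranspose_eq_transpose_of_trivial A
  have h := quadform_le' (Matrix.isHermitian_transpose_mul_self A)
    (fun i => eig_le_K A i) x
  rw [mulVec_dot_mulVec', ← hAH]
  rwa [dotProduct_comm] at h

lemma contraction' {a b : Type*} [Fintype a] [Fintype b] [DecidableEq a] [DecidableEq b] {Q : Matrix a b ℝ}
    (hQ : Qᵀ * Q = 1) (x : a → ℝ) : (Qᵀ *ᵥ x) ⬝ᵥ (Qᵀ *ᵥ x) ≤ x ⬝ᵥ x := by
  set P : Matrix a a ℝ := Q * Qᵀ with hP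
  have hPsym : Pᵀ = P := by rw [hP, Matrix.transpose_mul, Matrix.transpose_transpose]
  have hP2 : P * P = P := by
    rw [hP, Matrix.mul_assoc, ← Matrix.mul_assoc Qᵀ Q Qᵀ, hQ, Matrix.one_mul]
  have h0 : (Qᵀ *ᵥ x) ⬝ᵥ (Qᵀ *ᵥ x) = (P *ᵥ x) ⬝ᵥ x := by
    rw [mulVec_dot_mulVec', Matrix.transpose_transpose]
  have hproj : (1 - P) * (1 - P) = 1 - P := by
    rw [Matrix.sub_mul, Matrix.mul_sub, Matrix.mul_sub, hP2]
    simp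
  have hkey : 0 ≤ ((1 - P) *ᵥ x) ⬝ᵥ x := by
    have := dot_self_nonneg' ((1 - P) *ᵥ x)
    rwa [mulVec_dot_mulVec', Matrix.transpose_sub, Matrix.transpose_one, hPsym, hproj]
      at this
  have hexp : ((1 - P) *ᵥ x) ⬝ᵥ x = x ⬝ᵥ x - (P *ᵥ x) ⬝ᵥ x := by
    rw [Matrix.sub_mulVec, sub_dotProduct, Matrix.one_mulVec]
  rw [h0]
  rw [hexp] at hkey
  linarith

lemma K_transpose_le' {u : ℕ} (B : Matrix (Fin u) (Fin u) ℝ) : Kval Bᵀ ≤ Kval B := by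
  apply kthLargest_one_le (K_nonneg B)
  intro i
  set hH := Matrix.isHermitian_transpose_mul_self Bᵀ with hHdef
  set μ := hH.eigenvalues i with hμ
  set x : Fin u → ℝ := ⇑(hH.eigenvectorBasis i) with hx
  have hxne : x ≠ 0 := by
    intro h
    apply hH.eigenvectorBasis.orthonormal.ne_zero i
    ext j; exact congrFun h j
  have hxx : 0 < x ⬝ᵥ x := dot_self_pos' hxne
  have heig : (Bᵀᴴ * Bᵀ) *ᵥ x = μ • x := hH.mulVec_eigenvectorBasis i
  have hBB : Bᵀᴴ * Bᵀ = B * Bᵀ := by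
    rw [Matrix.conjTranspose_eq_transpose_of_trivial, Matrix.transpose_transpose]
  rw [hBB] at heig
  have hμ0 : 0 ≤ μ := Matrix.eigenvalues_conjTranspose_mul_self_nonneg Bᵀ i
  rcases eq_or_lt_of_le hμ0 with h | h
  · rw [← h]; exact K_nonneg B
  · have hBz : B *ᵥ (Bᵀ *ᵥ x) = μ • x := by rw [Matrix.mulVec_mulVec, heig]
    have hzz : (Bᵀ *ᵥ x) ⬝ᵥ (Bᵀ *ᵥ x) = μ * (x ⬝ᵥ x) := by
      rw [mulVec_dot_mulVec', Matrix.transpose_transpose, heig, smul_dotProduct,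
        smul_eq_mul]
    have hq := quad_le_K B (Bᵀ *ᵥ x)
    rw [hBz, hzz] at hq
    have hls : (μ • x) ⬝ᵥ (μ • x) = μ * μ * (x ⬝ᵥ x) := by
      rw [smul_dotProduct, dotProduct_smul, smul_eq_mul, smul_eq_mul]
      ring
    rw [hls] at hq
    have hmm : μ * μ * (x ⬝ᵥ x) = μ * (μ * (x ⬝ᵥ x)) := by ring
    rw [hmm] at hq
    exact le_of_mul_le_mul_right (by rw [mul_comm μ _, mul_comm (Kval B) _] at hq ⊢; exact hq) (mul_pos h hxx)

lemma Mdot_le {n u : ℕ} {Q2 : Matrix (Fin n ⊕ Fin 1) (Fin u) ℝ} {R22 : Matrix (Fin u) (Fin u) ℝ}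
    (horth2 : Q2ᵀ * Q2 = 1) (w : (Fin n ⊕ Fin 1) → ℝ) :
    ((-(R22ᵀ * Q2ᵀ)) *ᵥ w) ⬝ᵥ ((-(R22ᵀ * Q2ᵀ)) *ᵥ w) ≤ Kval R22 * (w ⬝ᵥ w) := by
  rw [Matrix.neg_mulVec, neg_dotProduct, dotProduct_neg, neg_neg,
    ← Matrix.mulVec_mulVec]
  calc (R22ᵀ *ᵥ (Q2ᵀ *ᵥ w)) ⬝ᵥ (R22ᵀ *ᵥ (Q2ᵀ *ᵥ w))
      ≤ Kval R22ᵀ * ((Q2ᵀ *ᵥ w) ⬝ᵥ (Q2ᵀ *ᵥ w)) := quad_le_K _ _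
    _ ≤ Kval R22ᵀ * (w ⬝ᵥ w) :=
        mul_le_mul_of_nonneg_left (contraction' horth2 w) (K_nonneg _)
    _ ≤ Kval R22 * (w ⬝ᵥ w) :=
        mul_le_mul_of_nonneg_right (K_transpose_le' R22) (dot_self_nonneg' w)

lemma specNorm_eq {m n : Type*} [Fintype m] [Fintype n] [DecidableEq n]
    (A : Matrix m n ℝ) : specNorm A = Real.sqrt (Kval A) := rfl

/-- from the rank-revealing factorization of (J_F(0)|F(0))ᵗ with
G = R₁₂ᵗR₁₁⁻ᵗ and d = GF₁ − F₂, one has (J_d(0)|d(0)) = −R₂₂ᵗQ₂ᵗ, hence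
‖J_d(0)‖₂ ≤ ‖R₂₂‖₂ and ‖d(0)‖₂ ≤ ‖R₂₂‖₂. -/
theorem rank_revealed_difference_matrix {n r u : ℕ}
    (JF1 : Matrix (Fin r) (Fin n) ℝ) (F10 : Fin r → ℝ)
    (JF2 : Matrix (Fin u) (Fin n) ℝ) (F20 : Fin u → ℝ)
    (Q1 : Matrix (Fin n ⊕ Fin 1) (Fin r) ℝ) (Q2 : Matrix (Fin n ⊕ Fin 1) (Fin u) ℝ)
    (R11 : Matrix (Fin r) (Fin r) ℝ) (R12 : Matrix (Fin r) (Fin u) ℝ)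
    (R22 : Matrix (Fin u) (Fin u) ℝ)
    (horth1 : Q1ᵀ * Q1 = 1) (horth2 : Q2ᵀ * Q2 = 1) (horth12 : Q1ᵀ * Q2 = 0)
    (hR11 : IsUnit R11.det)
    (h1 : Matrix.fromCols JF1 (Matrix.of fun i (_ : Fin 1) => F10 i) = R11ᵀ * Q1ᵀ)
    (h2 : Matrix.fromCols JF2 (Matrix.of fun i (_ : Fin 1) => F20 i)
        = R12ᵀ * Q1ᵀ + R22ᵀ * Q2ᵀ)
    (G : Matrix (Fin u) (Fin r) ℝ) (hG : G = R12ᵀ * (R11ᵀ)⁻¹) :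
    Matrix.fromCols (G * JF1 - JF2)
        (Matrix.of fun i (_ : Fin 1) => (G.mulVec F10 - F20) i) = -(R22ᵀ * Q2ᵀ) ∧
    specNorm (G * JF1 - JF2) ≤ specNorm R22 ∧
    vec2 (G.mulVec F10 - F20) ≤ specNorm R22 := by
  set A : Matrix (Fin u) (Fin n) ℝ := G * JF1 - JF2 with hA
  set v : Fin u → ℝ := G.mulVec F10 - F20 with hv
  -- Part 1: the matrix identity
  have hcol : (Matrix.of fun i (_ : Fin 1) => v i)
      = G * (Matrix.of fun i (_ : Fin 1) => F10 i) - (Matrix.of fun i (_ : Fin 1) => F20 i) := by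
    ext i j
    simp [hv, Matrix.mul_apply, Matrix.mulVec, dotProduct, Matrix.sub_apply]
  have hsplit : Matrix.fromCols A (Matrix.of fun i (_ : Fin 1) => v i)
      = G * Matrix.fromCols JF1 (Matrix.of fun i (_ : Fin 1) => F10 i)
        - Matrix.fromCols JF2 (Matrix.of fun i (_ : Fin 1) => F20 i) := by
    rw [hcol, Matrix.mul_fromCols]
    ext i (j | j) <;> simp [Matrix.fromCols, Matrix.sub_apply, hA]
  have hinv : (R11ᵀ)⁻¹ * R11ᵀ = 1 :=
    Matrix.nonsing_inv_mul _ (by rwa [Matrix.det_transpose])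
  have hM : Matrix.fromCols A (Matrix.of fun i (_ : Fin 1) => v i) = -(R22ᵀ * Q2ᵀ) := by
    rw [hsplit, h1, h2, hG, Matrix.mul_assoc R12ᵀ, ← Matrix.mul_assoc ((R11ᵀ)⁻¹), hinv,
      Matrix.one_mul]
    abel
  refine ⟨hM, ?_, ?_⟩
  · -- spectral norm bound
    rw [specNorm_eq, specNorm_eq]
    apply Real.sqrt_le_sqrt
    apply kthLargest_one_le (K_nonneg R22)
    intro i
    set hH := Matrix.isHermitian_transpose_mul_self A with hHdef
    set μ := hH.eigenvalues i with hμ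
    set x : Fin n → ℝ := ⇑(hH.eigenvectorBasis i) with hx
    have hxne : x ≠ 0 := by
      intro h
      apply hH.eigenvectorBasis.orthonormal.ne_zero i
      ext j; exact congrFun h j
    have hxx : 0 < x ⬝ᵥ x := dot_self_pos' hxne
    have heig : (Aᴴ * A) *ᵥ x = μ • x := hH.mulVec_eigenvectorBasis i
    rw [Matrix.conjTranspose_eq_transpose_of_trivial] at heig
    have hquad : (A *ᵥ x) ⬝ᵥ (A *ᵥ x) = μ * (x ⬝ᵥ x) := by
      rw [mulVec_dot_mulVec', heig, smul_dotProduct, smul_eq_mul]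
    -- A *ᵥ x = M *ᵥ (Sum.elim x 0)
    have hAx : A *ᵥ x = (-(R22ᵀ * Q2ᵀ)) *ᵥ (Sum.elim x 0) := by
      rw [← hM, Matrix.fromCols_mulVec_sumElim, Matrix.mulVec_zero, add_zero]
    have hxx' : (Sum.elim x (0 : Fin 1 → ℝ)) ⬝ᵥ (Sum.elim x 0) = x ⬝ᵥ x := by
      unfold dotProduct
      rw [Fintype.sum_sum_type]
      simp
    have hb := Mdot_le (R22 := R22) horth2 (Sum.elim x (0 : Fin 1 → ℝ))
    rw [← hAx, hquad, hxx'] at hb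
    exact le_of_mul_le_mul_right
      (by rw [mul_comm μ _, mul_comm (Kval R22) _] at hb ⊢; exact hb) hxx
  · -- vector bound
    rw [specNorm_eq]
    have hvM : v = (-(R22ᵀ * Q2ᵀ)) *ᵥ (Sum.elim (0 : Fin n → ℝ) (fun _ : Fin 1 => (1:ℝ))) := by
      rw [← hM, Matrix.fromCols_mulVec_sumElim, Matrix.mulVec_zero, zero_add]
      ext i
      simp [Matrix.mulVec, dotProduct]
    have hee : (Sum.elim (0 : Fin n → ℝ) (fun _ : Fin 1 => (1:ℝ))) ⬝ᵥ (Sum.elim 0 fun _ => 1) = 1 := by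
      unfold dotProduct
      rw [Fintype.sum_sum_type]
      simp
    have hb := Mdot_le (R22 := R22) horth2 (Sum.elim (0 : Fin n → ℝ) (fun _ : Fin 1 => (1:ℝ)))
    rw [← hvM, hee, mul_one] at hb
    have hsum : ∑ i, v i ^ 2 = v ⬝ᵥ v := by
      unfold dotProduct
      exact Finset.sum_congr rfl fun i _ => pow_two (v i)
    unfold vec2
    rw [hsum]
    exact Real.sqrt_le_sqrt hb
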